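/- arXiv:1410.0776 — 3 statements merged into one kernel-verified Lean document; each statement's English description precedes it below -/
import Mathlib

section
/- Let A be an n×(n+2) matrix over a field with rank n, and P_A its Plücker matrix. Then P_A has rank exactly 2. -/
open Matrix

def delCols {n : ℕ} {R : Type*} [CommRing R] (A : Matrix (Fin n) (Fin (n + 2)) R)
    (i j : Fin (n + 2)) (h : (i : ℕ) < (j : ℕ)) : Matrix (Fin n) (Fin n) R :=
  A.submatrix id (fun k =>
    j.succAbove ((⟨(i : ℕ), by have := j.isLt; omega⟩ : Fin (n + 1)).succAbove k))

def pluecker {n : ℕ} {R : Type*} [CommRing R] (A : Matrix (Fin n) (Fin (n + 2)) R) :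
    Matrix (Fin (n + 2)) (Fin (n + 2)) R :=
  Matrix.of fun i j =>
    if h : (i : ℕ) < (j : ℕ) then (-1 : R) ^ ((i : ℕ) + (j : ℕ)) * (delCols A i j h).det
    else if h' : (j : ℕ) < (i : ℕ) then
      -((-1 : R) ^ ((j : ℕ) + (i : ℕ)) * (delCols A j i h').det)
    else 0

lemma valSA {m : ℕ} (p : Fin (m + 1)) (k : Fin m) :
    ((p.succAbove k : Fin (m + 1)) : ℕ) = if (k : ℕ) < (p : ℕ) then (k : ℕ) else (k : ℕ) + 1 := by
  rcases lt_or_ge ((k : ℕ) : ℕ) (p : ℕ) with h | h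
  · rw [if_pos h, Fin.succAbove_of_castSucc_lt _ _ (by simpa [Fin.lt_def] using h)]; rfl
  · rw [if_neg (not_lt.2 h), Fin.succAbove_of_le_castSucc _ _ (by simpa [Fin.le_def] using h)]; rfl

lemma key {n : ℕ} {K : Type*} [Field K] (A : Matrix (Fin n) (Fin (n + 2)) K)
    (r : Fin n) (j : Fin (n + 2)) : ∑ i, A r i * pluecker A i j = 0 := by
  classical
  set M : Matrix (Fin (n + 1)) (Fin (n + 1)) K :=
    Matrix.of (Fin.cons (fun k => A r (j.succAbove k)) (fun p k => A p (j.succAbove k))) with hM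
  have hdet0 : M.det = 0 := by
    apply Matrix.det_zero_of_row_eq (i := 0) (j := r.succ) (Fin.succ_ne_zero r).symm
    ext k
    simp [hM, Fin.cons_zero, Fin.cons_succ]
  have hexp := Matrix.det_succ_row_zero M
  rw [hdet0] at hexp
  rw [Fin.sum_univ_succAbove (fun i => A r i * pluecker A i j) j]
  have hjj : pluecker A j j = 0 := by
    simp [pluecker]
  rw [hjj, mul_zero, zero_add]
  have hterm : ∀ q : Fin (n + 1), A r (j.succAbove q) * pluecker A (j.succAbove q) j
      = (-1 : K) ^ (j : ℕ) *
        ((-1) ^ (q : ℕ) * M 0 q * (M.submatrix Fin.succ q.succAbove).det) := by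
    intro q
    have hM0 : M 0 q = A r (j.succAbove q) := by simp [hM]
    have hval := valSA j q
    rcases lt_or_ge (q : ℕ) (j : ℕ) with hq | hq
    · have hvi : ((j.succAbove q : Fin (n + 2)) : ℕ) = (q : ℕ) := by rw [hval, if_pos hq]
      have hij : ((j.succAbove q : Fin (n + 2)) : ℕ) < (j : ℕ) := by omega
      have hD : delCols A (j.succAbove q) j hij = M.submatrix Fin.succ q.succAbove := by
        ext p k
        have : (⟨((j.succAbove q : Fin (n + 2)) : ℕ), by have := j.isLt; omega⟩ : Fin (n + 1)) = q :=
          Fin.ext hvi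
        simp [delCols, hM, this, Matrix.submatrix_apply]
      have hp : pluecker A (j.succAbove q) j
          = (-1 : K) ^ (((j.succAbove q : Fin (n+2)) : ℕ) + (j : ℕ)) * (delCols A _ j hij).det := by
        simp only [pluecker, Matrix.of_apply]
        rw [dif_pos hij]
      rw [hp, hD, hM0, hvi, pow_add]
      ring
    · have hvi : ((j.succAbove q : Fin (n + 2)) : ℕ) = (q : ℕ) + 1 := by
        rw [hval, if_neg (not_lt.2 hq)]
      have hji : (j : ℕ) < ((j.succAbove q : Fin (n + 2)) : ℕ) := by omega
      have hD : delCols A j (j.succAbove q) hji = M.submatrix Fin.succ q.succAbove := by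
        ext p k
        simp only [delCols, hM, Matrix.submatrix_apply, Matrix.of_apply, Fin.cons_succ, id_eq]
        congr 1
        apply Fin.ext
        have hk := k.isLt
        simp only [valSA, hvi]
        split_ifs <;> omega
      have hp : pluecker A (j.succAbove q) j
          = -((-1 : K) ^ ((j : ℕ) + ((j.succAbove q : Fin (n+2)) : ℕ)) *
            (delCols A j _ hji).det) := by
        simp only [pluecker, Matrix.of_apply]
        rw [dif_neg (by omega), dif_pos hji]
      rw [hp, hD, hM0, hvi, show (j : ℕ) + ((q : ℕ) + 1) = ((j:ℕ) + (q:ℕ)) + 1 by ring,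
        pow_succ, pow_add]
      ring
  rw [Finset.sum_congr rfl (fun q _ => hterm q), ← Finset.mul_sum, ← hexp, mul_zero]

lemma exists_minor {n : ℕ} {K : Type*} [Field K] (A : Matrix (Fin n) (Fin (n + 2)) K)
    (hA : A.rank = n) : ∃ (i j : Fin (n + 2)) (h : (i : ℕ) < (j : ℕ)),
      (delCols A i j h).det ≠ 0 := by
  classical
  have hspan : Submodule.span K (Set.range Aᵀ) = ⊤ := by
    apply Submodule.eq_top_of_finrank_eq
    rw [show Set.range Aᵀ = Set.range A.col from rfl, ← Matrix.rank_eq_finrank_span_cols, hA]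
    simp [Module.finrank_pi]
  obtain ⟨b, hbt, hbsp, hbi⟩ := exists_linearIndependent K (Set.range Aᵀ)
  rw [hspan] at hbsp
  haveI : Fintype b := (hbi.setFinite).fintype
  have hcard : Fintype.card b = n := by
    have h1 := Module.finrank_eq_card_basis
      (Module.Basis.mk hbi (by rw [Subtype.range_coe, hbsp]))
    simp [Module.finrank_pi] at h1
    have h2 : Fintype.card ↑b = Fintype.card { x // x ∈ b } :=
      Fintype.card_eq.mpr ⟨Equiv.refl _⟩
    rw [← Nat.card_coe_set_eq, Nat.card_eq_fintype_card] at h1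
    omega
  choose idx hidx using fun v : b => hbt v.2
  have hinj : Function.Injective idx := fun v w h =>
    Subtype.ext (by rw [← hidx v, ← hidx w, h])
  set S : Finset (Fin (n + 2)) := Finset.image idx Finset.univ with hS
  have hScard : S.card = n := by
    rw [hS, Finset.card_image_of_injective _ hinj, Finset.card_univ, hcard]
  have hcc : Sᶜ.card = 2 := by
    rw [Finset.card_compl, hScard]; simp
  obtain ⟨i, j, hlt, hij⟩ : ∃ i j : Fin (n + 2), i < j ∧ Sᶜ = {i, j} := by
    obtain ⟨a, c, hne, h⟩ := Finset.card_eq_two.mp hcc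
    rcases hne.lt_or_gt with h' | h'
    · exact ⟨a, c, h', h⟩
    · exact ⟨c, a, h', by rw [h, Finset.pair_comm]⟩
  have hltn : (i : ℕ) < (j : ℕ) := hlt
  refine ⟨i, j, hltn, ?_⟩
  set i' : Fin (n + 1) := ⟨(i : ℕ), by have := j.isLt; omega⟩ with hi'
  set g : Fin n → Fin (n + 2) := fun k => j.succAbove (i'.succAbove k) with hg
  have hgi : ∀ k, g k ≠ i := by
    intro k h
    have hI : j.succAbove i' = i := by
      apply Fin.ext; rw [valSA]; simp [hi', hltn]
    rw [← hI] at h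
    exact Fin.succAbove_ne i' k (Fin.succAbove_right_injective h)
  have hgj : ∀ k, g k ≠ j := fun k => Fin.succAbove_ne j _
  have hgS : ∀ k, g k ∈ S := by
    intro k
    by_contra h
    have h2 : g k ∈ Sᶜ := Finset.mem_compl.2 h
    rw [hij] at h2
    rcases Finset.mem_insert.mp h2 with h3 | h3
    · exact hgi k h3
    · exact hgj k (Finset.mem_singleton.mp h3)
  have hginj : Function.Injective g :=
    Fin.succAbove_right_injective.comp Fin.succAbove_right_injective
  have he : ∀ k, ∃ v : b, idx v = g k := by
    intro k
    have := hgS k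
    rw [hS, Finset.mem_image] at this
    obtain ⟨v, _, hv⟩ := this
    exact ⟨v, hv⟩
  choose e he using he
  have heinj : Function.Injective e := fun k l h => hginj (by rw [← he k, ← he l, h])
  have hcols : LinearIndependent K (fun k => Aᵀ (g k)) := by
    have heq : (fun k => Aᵀ (g k)) = (fun v : b => (v : Fin n → K)) ∘ e := by
      funext k; simp [← he k, hidx]
    rw [heq]
    exact hbi.comp e heinj
  have hunit : IsUnit (A.submatrix id g) := by
    rw [← Matrix.linearIndependent_cols_iff_isUnit]
    exact hcols
  have hdet : (A.submatrix id g).det ≠ 0 := by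
    have := hunit.map (Matrix.detMonoidHom (n := Fin n) (R := K))
    simpa using this.ne_zero
  convert hdet using 2
  rfl

lemma mul_pluecker_zero {n : ℕ} {K : Type*} [Field K] (A : Matrix (Fin n) (Fin (n + 2)) K) :
    A * pluecker A = 0 := by
  ext r c
  rw [Matrix.mul_apply]
  simpa using key A r c

/-- over a field, the Plücker matrix of a full-rank `n × (n+2)` matrix has
rank exactly `2`. -/
theorem pluecker_rank_two {n : ℕ} {K : Type*} [Field K] (A : Matrix (Fin n) (Fin (n + 2)) K)
    (hA : A.rank = n) : (pluecker A).rank = 2 := by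
  classical
  set P := pluecker A with hP
  -- upper bound
  have hupper : P.rank ≤ 2 := by
    have hle : LinearMap.range P.mulVecLin ≤ LinearMap.ker A.mulVecLin := by
      rintro x ⟨v, rfl⟩
      simp only [LinearMap.mem_ker, Matrix.mulVecLin_apply, Matrix.mulVec_mulVec, hP,
        mul_pluecker_zero A, Matrix.zero_mulVec]
    have hrn : Module.finrank K (LinearMap.range A.mulVecLin) = n := hA
    have h3 := LinearMap.finrank_range_add_finrank_ker A.mulVecLin
    rw [hrn, Module.finrank_pi] at h3
    have hker : Module.finrank K (LinearMap.ker A.mulVecLin) = 2 := by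
      simp at h3; omega
    calc P.rank = Module.finrank K (LinearMap.range P.mulVecLin) := rfl
      _ ≤ Module.finrank K (LinearMap.ker A.mulVecLin) := Submodule.finrank_mono hle
      _ = 2 := hker
  -- lower bound
  obtain ⟨i, j, hij, hdet⟩ := exists_minor A hA
  set p : K := (-1 : K) ^ ((i : ℕ) + (j : ℕ)) * (delCols A i j hij).det with hp
  have hpne : p ≠ 0 := mul_ne_zero (pow_ne_zero _ (neg_ne_zero.2 one_ne_zero)) hdet
  have hPij : P i j = p := by
    simp only [hP, pluecker, Matrix.of_apply]
    rw [dif_pos hij]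
  have hPji : P j i = -p := by
    simp only [hP, pluecker, Matrix.of_apply]
    rw [dif_neg (by omega), dif_pos hij]
  have hPii : P i i = 0 := by simp [hP, pluecker]
  have hPjj : P j j = 0 := by simp [hP, pluecker]
  have hpair : LinearIndependent K ![Pᵀ i, Pᵀ j] := by
    rw [LinearIndependent.pair_iff]
    intro s t hst
    have h1 := congrFun hst j
    have h2 := congrFun hst i
    simp only [Pi.add_apply, Pi.smul_apply, Matrix.transpose_apply, smul_eq_mul,
      Pi.zero_apply, hPji, hPjj, hPii, hPij, mul_zero, add_zero, zero_add, mul_neg] at h1 h2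
    constructor
    · have := neg_eq_zero.mp (h1 ▸ rfl : -(s * p) = 0)
      exact (mul_eq_zero.mp this).resolve_right hpne
    · exact (mul_eq_zero.mp h2).resolve_right hpne
  have hlower : 2 ≤ P.rank := by
    rw [Matrix.rank_eq_finrank_span_cols]
    have hle : Submodule.span K (Set.range ![Pᵀ i, Pᵀ j]) ≤ Submodule.span K (Set.range Pᵀ) := by
      apply Submodule.span_mono
      rintro x ⟨k, rfl⟩
      fin_cases k
      · exact ⟨i, rfl⟩
      · exact ⟨j, rfl⟩
    have h2 : Module.finrank K
        (Submodule.span K (Set.range ![Pᵀ i, Pᵀ j])) = 2 := by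
      rw [finrank_span_eq_card hpair]; simp
    calc 2 = Module.finrank K (Submodule.span K (Set.range ![Pᵀ i, Pᵀ j])) := h2.symm
      _ ≤ Module.finrank K (Submodule.span K (Set.range Pᵀ)) := Submodule.finrank_mono hle
  omega
end

section
/- Let p(u_0,...,u_{n+1}) be an irreducible polynomial over a field K that vanishes identically under the substitution u_i = t^{a_i} f_i(x), where a_0,...,a_{n+1} are columns of an n×(n+2) integer matrix A of rank n and f_i ∈ K[x]. Then every exponent vector v of a monomial of p satisfies the same n linear equations A·v = α for a fixed vector α ∈ ℤ^n; consequently the Newton polytope of p is at most 2-dimensional. -/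
open Matrix MvPolynomial


/-- In `MvPolynomial` over a field, if multiplying by `r ≠ 0` does not enlarge the support
of `p ≠ 0`, then `r` is a constant. -/
lemma mul_support_subset_const {N : ℕ} {K : Type*} [Field K]
    (p r : MvPolynomial (Fin N) K) (hp : p ≠ 0) (hr : r ≠ 0)
    (hsub : (p * r).support ⊆ p.support) : ∃ c : K, r = MvPolynomial.C c := by
  classical
  have hD : Function.Injective (toLex : (Fin N →₀ ℕ) → Lex (Fin N →₀ ℕ)) :=
    fun a b h => h
  have hadd : ∀ a b : (Fin N →₀ ℕ), toLex (a + b) = toLex a + toLex b := fun _ _ => rfl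
  have hlc : AddMonoidAlgebra.leadingCoeff (toLex : (Fin N →₀ ℕ) → Lex (Fin N →₀ ℕ)) p *
      AddMonoidAlgebra.leadingCoeff (toLex : (Fin N →₀ ℕ) → Lex (Fin N →₀ ℕ)) r ≠ 0 :=
    mul_ne_zero ((AddMonoidAlgebra.leadingCoeff_ne_zero hD).mpr hp)
      ((AddMonoidAlgebra.leadingCoeff_ne_zero hD).mpr hr)
  have hmul := AddMonoidAlgebra.supDegree_mul hD hadd hlc hp hr
  have hle : AddMonoidAlgebra.supDegree (toLex : (Fin N →₀ ℕ) → Lex (Fin N →₀ ℕ)) (p * r) ≤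
      AddMonoidAlgebra.supDegree (toLex : (Fin N →₀ ℕ) → Lex (Fin N →₀ ℕ)) p :=
    Finset.sup_mono hsub
  rw [hmul] at hle
  have h0 : AddMonoidAlgebra.supDegree (toLex : (Fin N →₀ ℕ) → Lex (Fin N →₀ ℕ)) r ≤
      (⊥ : Lex (Fin N →₀ ℕ)) := by
    have h2 : AddMonoidAlgebra.supDegree (toLex : (Fin N →₀ ℕ) → Lex (Fin N →₀ ℕ)) p +
        AddMonoidAlgebra.supDegree (toLex : (Fin N →₀ ℕ) → Lex (Fin N →₀ ℕ)) r ≤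
        AddMonoidAlgebra.supDegree (toLex : (Fin N →₀ ℕ) → Lex (Fin N →₀ ℕ)) p + ⊥ := by
      simpa [show (⊥ : Lex (Fin N →₀ ℕ)) = 0 from rfl] using hle
    exact le_of_add_le_add_left h2
  have hsupp : ∀ v ∈ r.support, v = 0 := by
    intro v hv
    have : toLex v ≤ (⊥ : Lex (Fin N →₀ ℕ)) := le_trans (Finset.le_sup hv) h0
    have : toLex v = (⊥ : Lex (Fin N →₀ ℕ)) := le_bot_iff.mp this
    exact hD this
  refine ⟨MvPolynomial.coeff 0 r, ?_⟩
  ext v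
  rcases eq_or_ne v 0 with rfl | hv
  · simp [coeff_C]
  · rw [coeff_C, if_neg (Ne.symm hv)]
    by_contra h
    exact hv (hsupp v (by simpa [MvPolynomial.mem_support_iff] using h))


lemma zpow_injective_exponent {K : Type*} [Field K] [IsAlgClosed K] {m m' : ℤ}
    (h : ∀ s : Kˣ, s ^ m = s ^ m') : m = m' := by
  by_contra hne
  set d : ℤ := m - m' with hd
  have hd0 : d ≠ 0 := sub_ne_zero.mpr hne
  have h1 : ∀ s : Kˣ, s ^ d = 1 := by
    intro s
    rw [hd, _root_.zpow_sub, h s]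
    exact mul_inv_cancel _
  have hn0 : d.natAbs ≠ 0 := Int.natAbs_ne_zero.mpr hd0
  have h2 : ∀ s : Kˣ, s ^ d.natAbs = 1 := by
    intro s
    rw [← zpow_natCast]
    rcases Int.natAbs_eq d with he | he
    · rw [← he]; exact h1 s
    · rw [show ((d.natAbs : ℤ)) = -d by omega, _root_.zpow_neg, h1 s, inv_one]
  set P : Polynomial K := Polynomial.X ^ d.natAbs - 1 with hPdef
  have hP : P ≠ 0 := by
    intro h0
    have := congrArg (Polynomial.eval 0) h0
    simp [hPdef, zero_pow hn0] at this
  have hroots : {x : K | P.IsRoot x}.Finite := Polynomial.finite_setOf_isRoot hP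
  have hsub : {x : K | x ≠ 0} ⊆ {x : K | P.IsRoot x} := by
    intro x hx
    have hu := h2 (Units.mk0 x hx)
    have hx1 : x ^ d.natAbs = 1 := by
      have := congrArg (Units.val) hu
      simpa using this
    simp [hPdef, Polynomial.IsRoot, hx1]
  have hinf : ({x : K | x ≠ 0}).Infinite := by
    have h3 : ({0}ᶜ : Set K).Infinite := (Set.finite_singleton 0).infinite_compl
    convert h3 using 1
    ext x; simp
  exact hinf (hroots.subset hsub)


lemma prod_zpow_sum' {G : Type*} [CommGroup G] {ι : Type*} (s : Finset ι) (g : ι → ℤ) (x : G) :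
    ∏ i ∈ s, x ^ g i = x ^ (∑ i ∈ s, g i) := by
  induction s using Finset.cons_induction with
  | empty => simp
  | cons a s ha ih => rw [Finset.prod_cons, Finset.sum_cons, ih, ← _root_.zpow_add]

lemma weight_constant {n : ℕ} {K : Type*} [Field K] [IsAlgClosed K]
    (A : Matrix (Fin n) (Fin (n + 2)) ℤ)
    (f : Fin (n + 2) → Polynomial K)
    (p : MvPolynomial (Fin (n + 2)) K) (hirr : Irreducible p)
    (hvan : ∀ (t : Fin n → Kˣ) (x : K),
      MvPolynomial.eval (fun i => ((∏ k, t k ^ A k i : Kˣ) : K) * (f i).eval x) p = 0)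
    (hgen : ∀ q : MvPolynomial (Fin (n + 2)) K,
      (∀ (t : Fin n → Kˣ) (x : K),
        MvPolynomial.eval (fun i => ((∏ k, t k ^ A k i : Kˣ) : K) * (f i).eval x) q = 0) →
      p ∣ q)
    (k : Fin n) {v v' : Fin (n + 2) →₀ ℕ} (hv : v ∈ p.support) (hv' : v' ∈ p.support) :
    (∑ i, (v i : ℤ) * A k i) = ∑ i, (v' i : ℤ) * A k i := by
  classical
  set w : (Fin (n + 2) →₀ ℕ) → ℤ := fun u => ∑ i, (u i : ℤ) * A k i with hw
  apply zpow_injective_exponent (K := K)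
  intro s
  set q : MvPolynomial (Fin (n + 2)) K :=
    ∑ u ∈ p.support, monomial u (((s ^ w u : Kˣ) : K) * coeff u p) with hq
  have hcoeff : ∀ u, coeff u q = ((s ^ w u : Kˣ) : K) * coeff u p := by
    intro u
    rw [hq, coeff_sum]
    simp only [coeff_monomial]
    rw [Finset.sum_ite_eq' p.support u]
    by_cases hu : u ∈ p.support
    · rw [if_pos hu]
    · rw [if_neg hu, MvPolynomial.notMem_support_iff.mp hu, mul_zero]
  have hprod : ∀ u : Fin (n + 2) →₀ ℕ,
      (∏ i, (((s ^ A k i : Kˣ) : K)) ^ u i) = ((s ^ w u : Kˣ) : K) := by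
    intro u
    have h1 : ∀ i : Fin (n + 2),
        (((s ^ A k i : Kˣ) : K)) ^ u i = ((s ^ ((u i : ℤ) * A k i) : Kˣ) : K) := by
      intro i
      rw [← Units.val_pow_eq_pow_val, ← zpow_natCast (s ^ A k i) (u i), ← _root_.zpow_mul, mul_comm]
    simp_rw [h1, hw]
    rw [← prod_zpow_sum' Finset.univ (fun i => (u i : ℤ) * A k i) s]
    exact (map_prod (Units.coeHom K) _ Finset.univ).symm
  have heval : ∀ g : Fin (n + 2) → K,
      eval g q = eval (fun i => ((s ^ A k i : Kˣ) : K) * g i) p := by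
    intro g
    rw [hq, map_sum, eval_eq']
    refine Finset.sum_congr rfl fun u hu => ?_
    rw [eval_monomial, Finsupp.prod_pow]
    simp_rw [mul_pow]
    rw [Finset.prod_mul_distrib, hprod u]
    ring
  have hqvan : ∀ (t : Fin n → Kˣ) (x : K),
      MvPolynomial.eval (fun i => ((∏ m, t m ^ A m i : Kˣ) : K) * (f i).eval x) q = 0 := by
    intro t x
    rw [heval]
    have hfun : (fun i => ((s ^ A k i : Kˣ) : K) * (((∏ m, t m ^ A m i : Kˣ) : K) * (f i).eval x))
        = fun i => ((∏ m, (Function.update t k (s * t k)) m ^ A m i : Kˣ) : K) * (f i).eval x := by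
      funext i
      have hF : (fun m => (Function.update t k (s * t k)) m ^ A m i)
          = Function.update (fun m => t m ^ A m i) k ((s * t k) ^ A k i) := by
        funext m
        rcases eq_or_ne m k with rfl | hm
        · simp
        · simp [Function.update_of_ne hm]
      have hk : (∏ m, (Function.update t k (s * t k)) m ^ A m i : Kˣ)
          = s ^ A k i * ∏ m, t m ^ A m i := by
        rw [hF, Finset.prod_update_of_mem (Finset.mem_univ k), mul_zpow, mul_assoc]
        congr 1
        exact (Finset.prod_eq_mul_prod_sdiff_singleton_of_mem (Finset.mem_univ k)
          (fun m => t m ^ A m i)).symm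
      rw [hk, Units.val_mul, mul_assoc]
    rw [hfun]
    exact hvan (Function.update t k (s * t k)) x
  obtain ⟨r, hr⟩ := hgen q hqvan
  have hq0 : q ≠ 0 := by
    intro h0
    have h1 := hcoeff v
    rw [h0] at h1
    simp only [coeff_zero] at h1
    exact MvPolynomial.mem_support_iff.mp hv
      (by
        rcases mul_eq_zero.mp h1.symm with h2 | h2
        · exact absurd h2 (Units.ne_zero _)
        · exact h2)
  have hr0 : r ≠ 0 := by
    rintro rfl
    rw [mul_zero] at hr
    exact hq0 hr
  have hsub : (p * r).support ⊆ p.support := by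
    rw [← hr]
    intro u hu
    have h1 := MvPolynomial.mem_support_iff.mp hu
    rw [hcoeff u] at h1
    exact MvPolynomial.mem_support_iff.mpr (right_ne_zero_of_mul h1)
  obtain ⟨c, rfl⟩ := mul_support_subset_const p r hirr.ne_zero hr0 hsub
  have hc : ∀ u ∈ p.support, ((s ^ w u : Kˣ) : K) = c := by
    intro u hu
    have h1 : coeff u q = c * coeff u p := by
      rw [hr, mul_comm p (C c), coeff_C_mul]
    rw [hcoeff u] at h1
    exact mul_right_cancel₀ (MvPolynomial.mem_support_iff.mp hu) h1
  exact Units.ext ((hc v hv).trans (hc v' hv').symm)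

lemma ker_finrank_two {n : ℕ} (A : Matrix (Fin n) (Fin (n + 2)) ℤ)
    (hA : (A.map (Int.cast : ℤ → ℚ)).rank = n) :
    Module.finrank ℝ (LinearMap.ker (A.map (Int.cast : ℤ → ℝ)).mulVecLin) = 2 := by
  classical
  have hQtop : LinearMap.range (A.map (Int.cast : ℤ → ℚ)).mulVecLin = ⊤ := by
    apply Submodule.eq_top_of_finrank_eq
    rw [show Module.finrank ℚ (LinearMap.range (A.map (Int.cast : ℤ → ℚ)).mulVecLin)
        = (A.map (Int.cast : ℤ → ℚ)).rank from rfl, hA,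
      Module.finrank_fintype_fun_eq_card, Fintype.card_fin]
  have hsurjQ : Function.Surjective (A.map (Int.cast : ℤ → ℚ)).mulVecLin :=
    LinearMap.range_eq_top.mp hQtop
  choose xq hxq using fun k : Fin n => hsurjQ (Pi.single k 1)
  have hLsingle : ∀ k, (A.map (Int.cast : ℤ → ℝ)).mulVecLin (fun i => ((xq k i : ℝ)))
      = Pi.single k 1 := by
    intro k
    funext j
    have h1 := congrFun (hxq k) j
    simp only [Matrix.mulVecLin_apply, Matrix.mulVec, dotProduct,
      Matrix.map_apply] at h1 ⊢
    have h2 : (∑ i, ((A j i : ℤ) : ℝ) * (xq k i : ℝ))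
        = ((∑ i, ((A j i : ℤ) : ℚ) * xq k i : ℚ) : ℝ) := by
      push_cast
      ring
    rw [h2, h1]
    rcases eq_or_ne j k with rfl | hjk
    · simp
    · simp [Pi.single_apply, hjk]
  have hsurjR : Function.Surjective (A.map (Int.cast : ℤ → ℝ)).mulVecLin := by
    intro y
    refine ⟨∑ k, y k • (fun i => ((xq k i : ℝ))), ?_⟩
    rw [map_sum]
    simp_rw [LinearMap.map_smul, hLsingle]
    funext j
    simp [Finset.sum_apply, Pi.single_apply]
  have hrk := LinearMap.finrank_range_add_finrank_ker (A.map (Int.cast : ℤ → ℝ)).mulVecLin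
  rw [LinearMap.range_eq_top.mpr hsurjR, Module.finrank_fintype_fun_eq_card,
    Fintype.card_fin, finrank_top, Module.finrank_fintype_fun_eq_card, Fintype.card_fin] at hrk
  omega


/-- if `p` is the irreducible defining polynomial of the almost-toric
hypersurface parameterized by `u_i = t^{a_i} f_i(x)`, then all exponent vectors `v` of `p`
satisfy the same linear equations `A · v = α`; consequently the Newton polytope of `p`
(the convex hull of the exponent vectors) is at most 2-dimensional. -/
theorem newton_polytope_at_most_two_dimensional {n : ℕ} {K : Type*} [Field K] [IsAlgClosed K]
    (A : Matrix (Fin n) (Fin (n + 2)) ℤ)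
    (hA : (A.map (Int.cast : ℤ → ℚ)).rank = n)
    (f : Fin (n + 2) → Polynomial K) (hf : ∀ i, f i ≠ 0)
    (p : MvPolynomial (Fin (n + 2)) K) (hirr : Irreducible p)
    (hvan : ∀ (t : Fin n → Kˣ) (x : K),
      MvPolynomial.eval (fun i => ((∏ k, t k ^ A k i : Kˣ) : K) * (f i).eval x) p = 0)
    (hgen : ∀ q : MvPolynomial (Fin (n + 2)) K,
      (∀ (t : Fin n → Kˣ) (x : K),
        MvPolynomial.eval (fun i => ((∏ k, t k ^ A k i : Kˣ) : K) * (f i).eval x) q = 0) →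
      p ∣ q) :
    (∃ α : Fin n → ℤ, ∀ v ∈ p.support, ∀ k, (∑ i, (v i : ℤ) * A k i) = α k) ∧
    Module.finrank ℝ
      (affineSpan ℝ
        ((fun v : Fin (n + 2) →₀ ℕ => (fun i => (v i : ℝ))) '' (p.support : Set _))).direction
      ≤ 2 := by
  classical
  have hp0 : p ≠ 0 := hirr.ne_zero
  obtain ⟨v₀, hv₀⟩ := MvPolynomial.support_nonempty.mpr hp0
  have key : ∀ v ∈ p.support, ∀ k, (∑ i, (v i : ℤ) * A k i) = ∑ i, (v₀ i : ℤ) * A k i :=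
    fun v hv k => weight_constant A f p hirr hvan hgen k hv hv₀
  refine ⟨⟨fun k => ∑ i, (v₀ i : ℤ) * A k i, fun v hv k => key v hv k⟩, ?_⟩
  set L := (A.map (Int.cast : ℤ → ℝ)).mulVecLin with hL
  have hker : Module.finrank ℝ (LinearMap.ker L) = 2 := ker_finrank_two A hA
  have hcast : ∀ u ∈ p.support,
      L (fun i => ((u i : ℝ))) = fun j => ((∑ i, (v₀ i : ℤ) * A j i : ℤ) : ℝ) := by
    intro u hu
    funext j
    simp only [hL, Matrix.mulVecLin_apply, Matrix.mulVec, dotProduct, Matrix.map_apply]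
    have h3 := congrArg (Int.cast : ℤ → ℝ) (key u hu j)
    push_cast at h3 ⊢
    rw [← h3]
    exact Finset.sum_congr rfl fun i _ => mul_comm _ _
  have hdir : (affineSpan ℝ
      ((fun v : Fin (n + 2) →₀ ℕ => (fun i => (v i : ℝ))) '' (p.support : Set _))).direction
      ≤ LinearMap.ker L := by
    rw [direction_affineSpan, vectorSpan_def, Submodule.span_le]
    rintro d hd
    rw [Set.mem_vsub] at hd
    obtain ⟨x, hx, y, hy, rfl⟩ := hd
    obtain ⟨v, hv, rfl⟩ := hx
    obtain ⟨v', hv', rfl⟩ := hy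
    rw [SetLike.mem_coe, LinearMap.mem_ker]
    have hsub : (fun i => ((v i : ℝ))) -ᵥ (fun i => ((v' i : ℝ)))
        = (fun i => ((v i : ℝ))) - (fun i => ((v' i : ℝ))) := rfl
    rw [hsub, map_sub, hcast v hv, hcast v' hv', sub_self]
  calc Module.finrank ℝ (affineSpan ℝ
        ((fun v : Fin (n + 2) →₀ ℕ => (fun i => (v i : ℝ))) '' (p.support : Set _))).direction
      ≤ Module.finrank ℝ (LinearMap.ker L) := Submodule.finrank_mono hdir
    _ = 2 := hker
end

section
/- Let A be an n×(n+2) integer matrix of rank n. For column vectors a, b ∈ ℤ^{n+2}, the determinant of the (n+2)×(n+2) matrix whose first two columns are b and a and whose remaining columns are the rows of A transposed satisfies det([b | a | A^T]) = δ · a^T P_A b, where P_A is the Plücker matrix of A and δ is the gcd of all n×n minors det(A_{[i,j]}). -/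
open Matrix

lemma det_row_sum' {m R : Type*} [DecidableEq m] [Fintype m] [CommRing R]
    (X : Matrix m m R) (r : m) (t : Finset m) (f : m → R) (u : m → m → R) :
    (X.updateRow r (∑ k ∈ t, f k • u k)).det = ∑ k ∈ t, f k * (X.updateRow r (u k)).det := by
  induction t using Finset.induction_on with
  | empty =>
      simp only [Finset.sum_empty]
      exact Matrix.det_eq_zero_of_row_eq_zero r (by simp)
  | insert _ _ hk ih =>
      rw [Finset.sum_insert hk, Matrix.det_updateRow_add, Matrix.det_updateRow_smul, ih,
        Finset.sum_insert hk]

lemma det_rows_single_lt {n : ℕ} {R : Type*} [CommRing R] (A : Matrix (Fin n) (Fin (n + 2)) R)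
    (X : Matrix (Fin (n + 2)) (Fin (n + 2)) R)
    (hX : ∀ (r : Fin n) (c : Fin (n + 2)), X r.succ.succ c = A r c)
    (i j : Fin (n + 2)) (h : (i : ℕ) < (j : ℕ)) :
    ((X.updateRow 0 (Pi.single j 1)).updateRow 1 (Pi.single i 1)).det
      = (-1 : R) ^ ((i : ℕ) + (j : ℕ)) * (delCols A i j h).det := by
  set Y := (X.updateRow 0 (Pi.single j 1)).updateRow 1 (Pi.single i 1) with hY
  have hY0 : ∀ c, Y 0 c = (Pi.single j 1 : Fin (n+2) → R) c := by
    intro c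
    simp [hY, Matrix.updateRow_apply, (show (0 : Fin (n+2)) ≠ 1 by simp [Fin.ext_iff])]
  have hY1 : ∀ c, Y 1 c = (Pi.single i 1 : Fin (n+2) → R) c := by
    intro c; simp [hY]
  have hY2 : ∀ (r : Fin n) (c : Fin (n + 2)), Y r.succ.succ c = A r c := by
    intro r c
    have h1 : (r.succ.succ : Fin (n + 2)) ≠ 1 := by
      simp [Fin.ext_iff]
    have h0 : (r.succ.succ : Fin (n + 2)) ≠ 0 := by
      simp [Fin.ext_iff]
    simp [hY, Matrix.updateRow_apply, h0, h1, hX]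
  rw [Matrix.det_succ_row_zero]
  rw [Finset.sum_eq_single j ?h1 ?h2]
  case h1 =>
    intro c _ hc
    rw [hY0, Pi.single_eq_of_ne hc, mul_zero, zero_mul]
  case h2 => intro hj; exact absurd (Finset.mem_univ j) hj
  rw [hY0, Pi.single_eq_same, mul_one]
  set Z := Y.submatrix Fin.succ j.succAbove with hZ
  set i' : Fin (n + 1) := ⟨(i : ℕ), by have := j.isLt; omega⟩ with hi'
  have hji' : j.succAbove i' = i := by
    rw [Fin.succAbove_of_castSucc_lt]
    · ext; simp [hi']
    · rw [Fin.lt_def]; simpa [hi'] using h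
  have hZ0 : ∀ c, Z 0 c = (Pi.single i 1 : Fin (n+2) → R) (j.succAbove c) := by
    intro c
    have : (Fin.succ 0 : Fin (n + 2)) = 1 := rfl
    simp [hZ, Matrix.submatrix_apply, this, hY1]
  rw [Matrix.det_succ_row_zero]
  rw [Finset.sum_eq_single i' ?h3 ?h4]
  case h3 =>
    intro c _ hc
    have : j.succAbove c ≠ i := by
      rw [← hji']
      exact fun hcc => hc (Fin.succAbove_right_injective hcc)
    rw [hZ0, Pi.single_eq_of_ne this, mul_zero, zero_mul]
  case h4 => intro hj; exact absurd (Finset.mem_univ i') hj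
  rw [hZ0, hji', Pi.single_eq_same, mul_one]
  have hW : Z.submatrix Fin.succ i'.succAbove = delCols A i j h := by
    ext r c
    simp only [hZ, Matrix.submatrix_apply, delCols]
    exact hY2 r _
  rw [hW, ← mul_assoc, ← pow_add]
  congr 1
  · congr 1
    simp [hi']
    omega

lemma det_rows_single {n : ℕ} {R : Type*} [CommRing R] (A : Matrix (Fin n) (Fin (n + 2)) R)
    (X : Matrix (Fin (n + 2)) (Fin (n + 2)) R)
    (hX : ∀ (r : Fin n) (c : Fin (n + 2)), X r.succ.succ c = A r c)
    (i j : Fin (n + 2)) :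
    ((X.updateRow 0 (Pi.single j 1)).updateRow 1 (Pi.single i 1)).det = pluecker A i j := by
  rcases lt_trichotomy ((i : ℕ)) ((j : ℕ)) with h | h | h
  · rw [det_rows_single_lt A X hX i j h, pluecker]
    simp only [Matrix.of_apply]
    rw [dif_pos h]
  · have : i = j := Fin.ext h
    subst this
    rw [Matrix.det_zero_of_row_eq (show (0 : Fin (n+2)) ≠ 1 by simp [Fin.ext_iff])]
    · simp [pluecker]
    · funext c
      simp [Matrix.updateRow_apply, (show (0 : Fin (n+2)) ≠ 1 by simp [Fin.ext_iff])]
  · -- swap rows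
    have hswap : ((X.updateRow 0 (Pi.single j 1)).updateRow 1 (Pi.single i 1))
        = ((X.updateRow 0 (Pi.single i 1)).updateRow 1 (Pi.single j 1)).submatrix
            (Equiv.swap (0 : Fin (n+2)) 1) id := by
      ext r c
      rcases eq_or_ne r 0 with h0 | h0
      · subst h0
        simp [Matrix.updateRow_apply, Equiv.swap_apply_left,
          (show (0 : Fin (n+2)) ≠ 1 by simp [Fin.ext_iff])]
      rcases eq_or_ne r 1 with h1 | h1
      · subst h1
        simp [Matrix.updateRow_apply, Equiv.swap_apply_right]
      · simp [Matrix.updateRow_apply, h0, h1, Equiv.swap_apply_of_ne_of_ne h0 h1]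
    have hd : (((X.updateRow 0 (Pi.single i 1)).updateRow 1 (Pi.single j 1)).submatrix
          (Equiv.swap (0 : Fin (n+2)) 1) id).det
        = -((X.updateRow 0 (Pi.single i 1)).updateRow 1 (Pi.single j 1)).det := by
      rw [Matrix.det_permute]
      simp [Equiv.Perm.sign_swap (show (0 : Fin (n+2)) ≠ 1 by simp [Fin.ext_iff])]
    rw [hswap, hd, det_rows_single_lt A X hX j i h, pluecker]
    simp only [Matrix.of_apply]
    rw [dif_neg (by omega), dif_pos h]

/-- for column vectors `a, b ∈ ℤ^{n+2}`, the determinant of the square matrix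
`[b | a | Aᵀ]` (first column `b`, second column `a`, remaining columns the rows of `A`)
equals `δ · aᵀ P_A b`, where `δ` is the gcd of the `n × n` minors of `A` and `P_A` is the
(δ-normalized) Plücker matrix. -/
theorem det_eq_delta_mul_pluecker_pairing {n : ℕ}
    (A : Matrix (Fin n) (Fin (n + 2)) ℤ) (hA : (A.map (Int.cast : ℤ → ℚ)).rank = n)
    (a b : Fin (n + 2) → ℤ) (δ : ℤ)
    (hδ : δ = Finset.gcd Finset.univ (fun p : Fin (n + 2) × Fin (n + 2) =>
      if h : (p.1 : ℕ) < (p.2 : ℕ) then (delCols A p.1 p.2 h).det else 0))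
    (M : Matrix (Fin (n + 2)) (Fin (n + 2)) ℤ)
    (hM : M = Matrix.of fun (r c : Fin (n + 2)) =>
      if h0 : (c : ℕ) = 0 then b r
      else if h1 : (c : ℕ) = 1 then a r
      else A ⟨(c : ℕ) - 2, by have := c.isLt; omega⟩ r) :
    (M.det : ℚ) = (δ : ℚ) *
      ((fun i => (a i : ℚ)) ⬝ᵥ
        ((δ : ℚ)⁻¹ • (pluecker A).map (Int.cast : ℤ → ℚ)).mulVec (fun i => (b i : ℚ))) := by
  set X := Mᵀ with hXdef
  have hX0 : ∀ c, X 0 c = b c := by intro c; simp [hXdef, hM, Matrix.transpose_apply]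
  have hX1 : ∀ c, X 1 c = a c := by intro c; simp [hXdef, hM, Matrix.transpose_apply]
  have hX2 : ∀ (r : Fin n) (c : Fin (n + 2)), X r.succ.succ c = A r c := by
    intro r c
    have h2 : ((r.succ.succ : Fin (n + 2)) : ℕ) = (r : ℕ) + 2 := by simp
    simp only [hXdef, hM, Matrix.transpose_apply, Matrix.of_apply, h2]
    rw [dif_neg (by omega), dif_neg (by omega)]
    congr 1
  -- the integer identity
  have hMdet : M.det = ∑ j, b j * ∑ i, a i * pluecker A i j := by
    have h1 : M.det = X.det := (Matrix.det_transpose M).symm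
    have h2 : X = (X.updateRow 1 a).updateRow 0 (∑ j, b j • (Pi.single j 1 : Fin (n+2) → ℤ)) := by
      have hb : (∑ j, b j • (Pi.single j 1 : Fin (n+2) → ℤ)) = b := by
        funext c
        simp [Finset.sum_apply, Pi.single_apply]
      rw [hb]
      ext r c
      rcases eq_or_ne r 0 with h0 | h0
      · subst h0; simp [hX0]
      rcases eq_or_ne r 1 with h1' | h1'
      · subst h1'
        simp [Matrix.updateRow_apply, h0, hX1,
          (show (1 : Fin (n+2)) ≠ 0 by simp [Fin.ext_iff])]
      · simp [Matrix.updateRow_apply, h0, h1']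
    rw [h1, h2, det_row_sum']
    congr 1; funext j
    congr 1
    have hcomm : (X.updateRow 1 a).updateRow 0 (Pi.single j 1)
        = (X.updateRow 0 (Pi.single j 1)).updateRow 1 (∑ i, a i • (Pi.single i 1 : Fin (n+2) → ℤ)) := by
      have ha : (∑ i, a i • (Pi.single i 1 : Fin (n+2) → ℤ)) = a := by
        funext c
        simp [Finset.sum_apply, Pi.single_apply]
      rw [ha]
      ext r c
      rcases eq_or_ne r 0 with h0 | h0
      · subst h0
        simp [Matrix.updateRow_apply, (show (0 : Fin (n+2)) ≠ 1 by simp [Fin.ext_iff])]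
      rcases eq_or_ne r 1 with h1' | h1'
      · subst h1'; simp [Matrix.updateRow_apply, h0]
      · simp [Matrix.updateRow_apply, h0, h1']
    rw [hcomm, det_row_sum']
    congr 1; funext i
    rw [det_rows_single A X hX2 i j]
  by_cases hd0 : δ = 0
  · have hall : ∀ (i j : Fin (n + 2)) (h : (i : ℕ) < (j : ℕ)), (delCols A i j h).det = 0 := by
      intro i j h
      have hz := (Finset.gcd_eq_zero_iff).mp (hδ ▸ hd0) (i, j) (Finset.mem_univ _)
      rwa [dif_pos h] at hz
    have hp : ∀ i j, pluecker A i j = 0 := by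
      intro i j
      simp only [pluecker, Matrix.of_apply]
      split_ifs with h h'
      · rw [hall i j h, mul_zero]
      · rw [hall j i h', mul_zero, neg_zero]
      · rfl
    rw [hMdet, hd0]
    simp [hp]
  · have hdq : (δ : ℚ) ≠ 0 := Int.cast_ne_zero.mpr hd0
    rw [Matrix.smul_mulVec, dotProduct_smul, smul_eq_mul, ← mul_assoc,
      mul_inv_cancel₀ hdq, one_mul]
    rw [hMdet]
    push_cast
    simp only [dotProduct, Matrix.mulVec, Matrix.map_apply, Finset.mul_sum]
    rw [Finset.sum_comm]
    exact Finset.sum_congr rfl fun i _ => Finset.sum_congr rfl fun j _ => by ring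
end
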